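/- For every n > 0, the monoid L₄¹ satisfies the identity Uₙ ≈ Vₙ, where Uₙ = (x₁x₂⋯xₙ)(xₙxₙ₋₁⋯x₁)(x₁x₂⋯xₙ) and Vₙ = (x₁x₂⋯xₙ)(x₁²x₂²⋯xₙ²) for distinct variables x₁,…,xₙ. -/

import Mathlib

/-- The alphabet of variables. -/
abbrev Var := ℕ

/-- Words are (possibly empty) lists of variables; elements of the free
semigroup `𝔄⁺` are the nonempty ones. -/
abbrev Word := List Var

/-- Two words are of the same type if they agree after collapsing each
maximal constant run (island) to a single letter. -/
def sameType (u v : Word) : Prop :=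
  u.destutter (· ≠ ·) = v.destutter (· ≠ ·)

/-- The number of islands of a word. -/
def height (u : Word) : ℕ := (u.destutter (· ≠ ·)).length

/-- The set of variables occurring in a word. -/
def con (u : Word) : Set Var := {x | x ∈ u}

/-- `del u X` is the word obtained from `u` by deleting all occurrences of all
variables not in the list `X`; i.e. `u(x₁,…,x_k)` for `X = [x₁,…,x_k]`. -/
def del (u : Word) (X : List Var) : Word := u.filter (· ∈ X)

/-- The set of linear variables of `u` (occurring exactly once). -/
def lin (u : Word) : Set Var := {x | u.count x = 1}

/-- The set of non-linear variables of `u` (occurring at least twice). -/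
def nonlin (u : Word) : Set Var := {x | 2 ≤ u.count x}

/-- The set of variables occurring exactly twice in `u`. -/
def con2 (u : Word) : Set Var := {x | u.count x = 2}

/-- The set of variables occurring at least three times in `u`. -/
def conGt2 (u : Word) : Set Var := {x | 3 ≤ u.count x}

/-- Applying a substitution `Θ : 𝔄 → 𝔄⁺` to a word, as the extension of `Θ`
to a homomorphism. -/
def subst (Θ : Var → Word) (u : Word) : Word := u.flatMap Θ

/-- `w` is a power (with positive exponent) of the variable `c`. -/
def isPowerOf (w : Word) (c : Var) : Prop := ∃ k : ℕ, 0 < k ∧ w = List.replicate k c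

/-- A monoid `M` satisfies the identity `u ≈ v` if every monoid homomorphism
from the free monoid `𝔄*` to `M` (equivalently, the extension of every map
`φ : 𝔄 → M`) identifies `u` and `v`. -/
def MSat (M : Type) [Monoid M] (u v : Word) : Prop :=
  ∀ φ : Var → M, (u.map φ).prod = (v.map φ).prod

/-- Evaluation of a nonempty word in a semigroup under `φ : 𝔄 → S`
(the empty word evaluates to `none`). -/
def evalS {S : Type} [Semigroup S] (φ : Var → S) : Word → Option S
  | [] => none
  | a :: t => some ((t.map φ).foldl (· * ·) (φ a))

/-- A semigroup `S` satisfies the identity `u ≈ v` between nonempty words if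
every semigroup homomorphism from the free semigroup `𝔄⁺` to `S` identifies
`u` and `v`. -/
def SSat (S : Type) [Semigroup S] (u v : Word) : Prop :=
  ∀ φ : Var → S, evalS φ u = evalS φ v

/-- Property (C_ℓ) for a monoid: every word in two variables of height at most
`ℓ` can form an identity of `M` only with a word of the same type. -/
def MPropC (M : Type) [Monoid M] (ℓ : ℕ) : Prop :=
  ∀ x y : Var, x ≠ y → ∀ u : Word, u ≠ [] → (∀ c ∈ u, c = x ∨ c = y) →
    height u ≤ ℓ → ∀ v : Word, MSat M u v → sameType u v

/-- Property (C_ℓ) for a semigroup. -/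
def SPropC (S : Type) [Semigroup S] (ℓ : ℕ) : Prop :=
  ∀ x y : Var, x ≠ y → ∀ u : Word, u ≠ [] → (∀ c ∈ u, c = x ∨ c = y) →
    height u ≤ ℓ → ∀ v : Word, SSat S u v → sameType u v

/-- A monoid is finitely based if some finite set of identities it satisfies
entails all its identities (in every monoid). -/
def MonoidFB (M : Type) [Monoid M] : Prop :=
  ∃ Sig : Finset (Word × Word),
    (∀ p ∈ Sig, MSat M p.1 p.2) ∧
    ∀ (N : Type) [Monoid N], (∀ p ∈ Sig, MSat N p.1 p.2) →
      ∀ u v : Word, MSat M u v → MSat N u v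

/-- A semigroup is finitely based if some finite set of identities (between
nonempty words) it satisfies entails all its identities (in every semigroup). -/
def SemigroupFB (S : Type) [Semigroup S] : Prop :=
  ∃ Sig : Finset (Word × Word),
    (∀ p ∈ Sig, p.1 ≠ [] ∧ p.2 ≠ [] ∧ SSat S p.1 p.2) ∧
    ∀ (T : Type) [Semigroup T], (∀ p ∈ Sig, SSat T p.1 p.2) →
      ∀ u v : Word, u ≠ [] → v ≠ [] → SSat S u v → SSat T u v

/-- `B` is a block of `u` occurring as `u = p ++ B ++ s`: it contains no linear
variables of `u` and is maximal with this property. -/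
def IsBlockAt (u p B s : Word) : Prop :=
  u = p ++ B ++ s ∧ (∀ c ∈ B, c ∉ lin u) ∧
  (∀ c : Var, p.getLast? = some c → c ∈ lin u) ∧
  (∀ c : Var, s.head? = some c → c ∈ lin u)

/-- The word `Uₙ = (x₁⋯xₙ)(xₙ⋯x₁)(x₁⋯xₙ)`. -/
def Uword (n : ℕ) (x : Fin n → Var) : Word :=
  List.ofFn x ++ (List.ofFn x).reverse ++ List.ofFn x

/-- The word `Vₙ = (x₁⋯xₙ)(x₁²x₂²⋯xₙ²)`. -/
def Vword (n : ℕ) (x : Fin n → Var) : Word :=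
  List.ofFn x ++ (List.ofFn x).flatMap (fun c => [c, c])

/-- The generator `a` of `L₄¹`. -/
def genA : FreeMonoid (Fin 2) := FreeMonoid.of 0

/-- The generator `b` of `L₄¹`. -/
def genB : FreeMonoid (Fin 2) := FreeMonoid.of 1

/-- The defining relations of `L₄¹`:
`a² = a`, `b² = b`, `ababa = abab`, `babab = abab`. -/
def L4rel : FreeMonoid (Fin 2) → FreeMonoid (Fin 2) → Prop := fun u v =>
  (u = genA * genA ∧ v = genA) ∨ (u = genB * genB ∧ v = genB) ∨
  (u = genA * genB * genA * genB * genA ∧ v = genA * genB * genA * genB) ∨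
  (u = genB * genA * genB * genA * genB ∧ v = genA * genB * genA * genB)

/-- The 9-element monoid `L₄¹ = ⟨a, b, 1 ∣ aa = a, bb = b, abab = 0⟩`,
presented by generators `a, b` and relations
`a² = a`, `b² = b`, `ababa = abab`, `babab = abab`. -/
def L41 : Type := PresentedMonoid L4rel

instance : Monoid L41 := inferInstanceAs (Monoid (PresentedMonoid L4rel))


/-! ### Auxiliary: a concrete 9-element model of `L₄¹` -/

section Aux

/-- Concrete 9-element carrier. -/
inductive K where
  | K1 | Ka | Kb | Kab | Kba | Kaba | Kbab | Kbaba | K0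
  deriving DecidableEq

instance : Fintype K :=
  Fintype.ofList [K.K1, K.Ka, K.Kb, K.Kab, K.Kba, K.Kaba, K.Kbab, K.Kbaba, K.K0]
    (fun x => by cases x <;> simp)

namespace K

def kmul : K → K → K
  | K1, K1 => K1
  | K1, Ka => Ka
  | K1, Kb => Kb
  | K1, Kab => Kab
  | K1, Kba => Kba
  | K1, Kaba => Kaba
  | K1, Kbab => Kbab
  | K1, Kbaba => Kbaba
  | K1, K0 => K0
  | Ka, K1 => Ka
  | Ka, Ka => Ka
  | Ka, Kb => Kab
  | Ka, Kab => Kab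
  | Ka, Kba => Kaba
  | Ka, Kaba => Kaba
  | Ka, Kbab => K0
  | Ka, Kbaba => K0
  | Ka, K0 => K0
  | Kb, K1 => Kb
  | Kb, Ka => Kba
  | Kb, Kb => Kb
  | Kb, Kab => Kbab
  | Kb, Kba => Kba
  | Kb, Kaba => Kbaba
  | Kb, Kbab => Kbab
  | Kb, Kbaba => Kbaba
  | Kb, K0 => K0
  | Kab, K1 => Kab
  | Kab, Ka => Kaba
  | Kab, Kb => Kab
  | Kab, Kab => K0
  | Kab, Kba => Kaba
  | Kab, Kaba => K0
  | Kab, Kbab => K0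
  | Kab, Kbaba => K0
  | Kab, K0 => K0
  | Kba, K1 => Kba
  | Kba, Ka => Kba
  | Kba, Kb => Kbab
  | Kba, Kab => Kbab
  | Kba, Kba => Kbaba
  | Kba, Kaba => Kbaba
  | Kba, Kbab => K0
  | Kba, Kbaba => K0
  | Kba, K0 => K0
  | Kaba, K1 => Kaba
  | Kaba, Ka => Kaba
  | Kaba, Kb => K0
  | Kaba, Kab => K0
  | Kaba, Kba => K0
  | Kaba, Kaba => K0
  | Kaba, Kbab => K0
  | Kaba, Kbaba => K0
  | Kaba, K0 => K0
  | Kbab, K1 => Kbab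
  | Kbab, Ka => Kbaba
  | Kbab, Kb => Kbab
  | Kbab, Kab => K0
  | Kbab, Kba => Kbaba
  | Kbab, Kaba => K0
  | Kbab, Kbab => K0
  | Kbab, Kbaba => K0
  | Kbab, K0 => K0
  | Kbaba, K1 => Kbaba
  | Kbaba, Ka => Kbaba
  | Kbaba, Kb => K0
  | Kbaba, Kab => K0
  | Kbaba, Kba => K0
  | Kbaba, Kaba => K0
  | Kbaba, Kbab => K0
  | Kbaba, Kbaba => K0
  | Kbaba, K0 => K0
  | K0, K1 => K0
  | K0, Ka => K0
  | K0, Kb => K0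
  | K0, Kab => K0
  | K0, Kba => K0
  | K0, Kaba => K0
  | K0, Kbab => K0
  | K0, Kbaba => K0
  | K0, K0 => K0

set_option maxRecDepth 20000 in
instance : Monoid K where
  mul := kmul
  one := K.K1
  one_mul := by decide
  mul_one := by decide
  mul_assoc := by decide

@[simp] lemma mul_Ka_K1 : Ka * K1 = Ka := rfl
@[simp] lemma mul_Ka_Ka : Ka * Ka = Ka := rfl
@[simp] lemma mul_Ka_Kb : Ka * Kb = Kab := rfl
@[simp] lemma mul_Ka_Kab : Ka * Kab = Kab := rfl
@[simp] lemma mul_Ka_Kba : Ka * Kba = Kaba := rfl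
@[simp] lemma mul_Ka_Kaba : Ka * Kaba = Kaba := rfl
@[simp] lemma mul_Ka_Kbab : Ka * Kbab = K0 := rfl
@[simp] lemma mul_Ka_Kbaba : Ka * Kbaba = K0 := rfl
@[simp] lemma mul_Ka_K0 : Ka * K0 = K0 := rfl
@[simp] lemma mul_Kb_K1 : Kb * K1 = Kb := rfl
@[simp] lemma mul_Kb_Ka : Kb * Ka = Kba := rfl
@[simp] lemma mul_Kb_Kb : Kb * Kb = Kb := rfl
@[simp] lemma mul_Kb_Kab : Kb * Kab = Kbab := rfl
@[simp] lemma mul_Kb_Kba : Kb * Kba = Kba := rfl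
@[simp] lemma mul_Kb_Kaba : Kb * Kaba = Kbaba := rfl
@[simp] lemma mul_Kb_Kbab : Kb * Kbab = Kbab := rfl
@[simp] lemma mul_Kb_Kbaba : Kb * Kbaba = Kbaba := rfl
@[simp] lemma mul_Kb_K0 : Kb * K0 = K0 := rfl

def R : List (K × K × K) := [
  (K1, K1, K1),
  (K0, K0, K0),
  (K0, Kaba, K0),
  (K0, Kba, K0),
  (K0, Kbab, K0),
  (K0, Kbaba, K0),
  (Ka, Ka, Ka),
  (Kab, Kab, K0),
  (Kab, Kaba, K0),
  (Kab, Kba, Kab),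
  (Kab, Kbab, K0),
  (Kab, Kbaba, K0),
  (Kaba, K0, K0),
  (Kaba, Kab, K0),
  (Kaba, Kaba, K0),
  (Kaba, Kaba, Kaba),
  (Kaba, Kba, K0),
  (Kaba, Kbab, K0),
  (Kaba, Kbaba, K0),
  (Kb, Kb, Kb),
  (Kba, K0, Kbaba),
  (Kba, Kab, Kba),
  (Kba, Kaba, Kbaba),
  (Kba, Kba, Kbaba),
  (Kba, Kbab, Kbaba),
  (Kbab, K0, K0),
  (Kbab, Kab, K0),
  (Kbab, Kaba, K0),
  (Kbab, Kba, K0),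
  (Kbab, Kbab, K0),
  (Kbab, Kbab, Kbab),
  (Kbab, Kbaba, K0),
  (Kbaba, K0, K0),
  (Kbaba, K0, Kbaba),
  (Kbaba, Kab, K0),
  (Kbaba, Kaba, K0),
  (Kbaba, Kbab, K0),
  (Kbaba, Kbaba, K0)
]

set_option maxRecDepth 40000 in
lemma Rstart : (K.K1, K.K1, K.K1) ∈ R := by decide

set_option maxRecDepth 40000 in
lemma Rclosed : ∀ t ∈ R, ∀ x : K, (x * t.1, t.2.1 * x, x * (x * t.2.2)) ∈ R := by decide

set_option maxRecDepth 40000 in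
lemma Rinv : ∀ t ∈ R, t.1 * t.2.1 * t.1 = t.1 * t.2.2 := by decide

lemma mem_R (L : List K) :
    (L.prod, L.reverse.prod, (L.flatMap fun k => [k, k]).prod) ∈ R := by
  induction L with
  | nil => exact Rstart
  | cons x L ih =>
      have := Rclosed _ ih x
      simpa [List.prod_append, mul_assoc] using this

lemma Kident (L : List K) :
    L.prod * L.reverse.prod * L.prod = L.prod * (L.flatMap fun k => [k, k]).prod :=
  Rinv _ (mem_R L)

end K

open K in
/-- Interpretation of the generators in `K`. -/
def fK : Fin 2 → K := fun c => if c = 0 then Ka else Kb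

lemma fK_rel : ∀ u v : FreeMonoid (Fin 2), L4rel u v →
    FreeMonoid.lift fK u = FreeMonoid.lift fK v := by
  intro u v h
  rcases h with ⟨hu, hv⟩ | ⟨hu, hv⟩ | ⟨hu, hv⟩ | ⟨hu, hv⟩ <;> subst hu <;> subst hv <;>
    simp [genA, genB, fK] <;> rfl

/-- The canonical homomorphism `L₄¹ →* K`. -/
def hK : PresentedMonoid L4rel →* K := PresentedMonoid.lift fK fK_rel

/-- The generator `a` of `L41`. -/
def Agen : PresentedMonoid L4rel := PresentedMonoid.of L4rel 0

/-- The generator `b` of `L41`. -/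
def Bgen : PresentedMonoid L4rel := PresentedMonoid.of L4rel 1

lemma mk_rel {u v : FreeMonoid (Fin 2)} (h : L4rel u v) :
    PresentedMonoid.mk L4rel u = PresentedMonoid.mk L4rel v :=
  Quot.sound (ConGen.Rel.of u v h)

lemma relA : Agen * Agen = Agen := mk_rel (Or.inl ⟨rfl, rfl⟩)

lemma relB : Bgen * Bgen = Bgen := mk_rel (Or.inr (Or.inl ⟨rfl, rfl⟩))

lemma rel3 : Agen * (Bgen * (Agen * (Bgen * Agen))) = Agen * (Bgen * (Agen * Bgen)) := by
  have h := mk_rel (u := genA * genB * genA * genB * genA)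
    (v := genA * genB * genA * genB) (Or.inr (Or.inr (Or.inl ⟨rfl, rfl⟩)))
  simpa [genA, genB, map_mul, mul_assoc, Agen, Bgen, PresentedMonoid.of] using h

lemma rel4 : Bgen * (Agen * (Bgen * (Agen * Bgen))) = Agen * (Bgen * (Agen * Bgen)) := by
  have h := mk_rel (u := genB * genA * genB * genA * genB)
    (v := genA * genB * genA * genB) (Or.inr (Or.inr (Or.inr ⟨rfl, rfl⟩)))
  simpa [genA, genB, map_mul, mul_assoc, Agen, Bgen, PresentedMonoid.of] using h

lemma relA' (m : PresentedMonoid L4rel) : Agen * (Agen * m) = Agen * m := by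
  rw [← mul_assoc, relA]

lemma relB' (m : PresentedMonoid L4rel) : Bgen * (Bgen * m) = Bgen * m := by
  rw [← mul_assoc, relB]

open K in
/-- A set-theoretic section of `hK`. -/
def gK : K → PresentedMonoid L4rel
  | K1 => 1
  | Ka => Agen
  | Kb => Bgen
  | Kab => Agen * Bgen
  | Kba => Bgen * Agen
  | Kaba => Agen * (Bgen * Agen)
  | Kbab => Bgen * (Agen * Bgen)
  | Kbaba => Bgen * (Agen * (Bgen * Agen))
  | K0 => Agen * (Bgen * (Agen * Bgen))

lemma gK_stepA (k : K) : gK (K.Ka * k) = Agen * gK k := by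
  cases k <;>
    simp [gK, mul_assoc, relA, relB, relA', relB', rel3, rel4]

lemma gK_stepB (k : K) : gK (K.Kb * k) = Bgen * gK k := by
  cases k <;>
    simp [gK, mul_assoc, relA, relB, relA', relB', rel3, rel4]

/-- The generators of `L41` as a function. -/
def genF : Fin 2 → PresentedMonoid L4rel := fun c => if c = 0 then Agen else Bgen

lemma gK_step (c : Fin 2) (k : K) : gK (fK c * k) = genF c * gK k :=
  match c with
  | 0 => gK_stepA k
  | 1 => gK_stepB k

lemma mk_eq_genF_mul (c : Fin 2) (w : FreeMonoid (Fin 2)) :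
    PresentedMonoid.mk L4rel (FreeMonoid.of c * w)
      = genF c * PresentedMonoid.mk L4rel w := by
  have h1 : PresentedMonoid.mk L4rel (FreeMonoid.of c * w)
      = PresentedMonoid.mk L4rel (FreeMonoid.of c) * PresentedMonoid.mk L4rel w := rfl
  rw [h1]
  congr 1
  match c with
  | 0 => rfl
  | 1 => rfl

lemma hK_genF (c : Fin 2) : hK (genF c) = fK c :=
  match c with
  | 0 => rfl
  | 1 => rfl

lemma gK_hK (m : PresentedMonoid L4rel) : gK (hK m) = m := by
  refine PresentedMonoid.inductionOn m ?_
  intro w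
  induction w using FreeMonoid.recOn with
  | one => rfl
  | of_mul c w ih =>
      rw [mk_eq_genF_mul, map_mul, hK_genF, gK_step, ih]

end Aux

/-- For every `n > 0`, the monoid `L₄¹` satisfies the identity
`Uₙ ≈ Vₙ`. -/
theorem stmt2 (n : ℕ) (hn : 0 < n) (x : Fin n → Var) (hx : Function.Injective x) :
    MSat L41 (Uword n x) (Vword n x) := by
  intro φ
  show ((Uword n x).map φ).prod = ((Vword n x).map φ).prod
  have main : ∀ φ' : Var → PresentedMonoid L4rel,
      ((Uword n x).map φ').prod = ((Vword n x).map φ').prod := by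
    intro φ'
    have main' : hK ((Uword n x).map φ').prod = hK ((Vword n x).map φ').prod := by
      rw [← List.prod_hom _ hK, ← List.prod_hom _ hK, List.map_map, List.map_map]
      set ψ : Var → K := hK ∘ φ' with hψ
      set L : List K := (List.ofFn x).map ψ with hL
      have hU : (Uword n x).map ψ = L ++ L.reverse ++ L := by
        simp only [Uword, List.map_append, List.map_reverse, hL]
      have hV : (Vword n x).map ψ = L ++ L.flatMap fun k => [k, k] := by
        simp only [Vword, List.map_append, List.map_flatMap, hL, List.flatMap_map]
        rfl
      rw [hU, hV, List.prod_append, List.prod_append, List.prod_append]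
      exact K.Kident L
    have key := congrArg gK main'
    rwa [gK_hK, gK_hK] at key
  exact main φ
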